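/- arXiv:2010.04583 — 3 statements merged into one kernel-verified Lean document; each statement's English description precedes it below -/
import Mathlib

section
/- For every integer t ≥ 1, the sum over all integers x of P(x,t) equals 1, i.e. Σ_{x∈ℤ} |a(x,t)|² = 1. -/
open scoped BigOperators

/-- The final x-coordinate of a checker path from `(0,0)` encoded by its sequence of moves
(`true` = move `(1,1)`, `false` = move `(-1,1)`). -/
def moveEndpoint {n : ℕ} (d : Fin n → Bool) : ℤ :=
  ∑ k, (if d k then (1 : ℤ) else -1)

/-- The number of turns of a checker path encoded by its sequence of moves. -/
def nturns {n : ℕ} (d : Fin n → Bool) : ℕ :=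
  ((List.ofFn d).zip (List.ofFn d).tail).countP fun p => p.1 != p.2

/-- Checker paths from `(0,0)` to `(x,t)` whose first step is to `(1,1)`,
encoded by their sequences of moves. -/
def cpaths (x t : ℤ) : Finset (Fin t.toNat → Bool) :=
  Finset.univ.filter fun d => moveEndpoint d = x ∧ (List.ofFn d).headI = true

/-- Feynman checkers amplitude `a(x,t) = 2^((1-t)/2) * i * ∑ₛ (-i)^turns(s)`. -/
noncomputable def a (x t : ℤ) : ℂ :=
  (Real.sqrt 2 : ℂ) ^ (1 - t) * Complex.I * ∑ d ∈ cpaths x t, (-Complex.I) ^ nturns d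

open Complex

def stp (b : Bool) : ℤ := if b then 1 else -1

def lst {n : ℕ} (d : Fin n → Bool) : Bool := (List.ofFn d).getLastD true

noncomputable def W (n : ℕ) (b c : Bool) (x : ℤ) : ℂ :=
  ∑ d : Fin n → Bool,
    if moveEndpoint d = x ∧ (List.ofFn d).headI = b ∧ lst d = c
    then (-Complex.I) ^ nturns d else 0

-- basic lemmas
lemma ofFn_cons {n : ℕ} (b : Bool) (e : Fin n → Bool) :
    List.ofFn (Fin.cons b e) = b :: List.ofFn e := by
  rw [List.ofFn_succ]
  simp

lemma moveEndpoint_cons {n : ℕ} (b : Bool) (e : Fin n → Bool) :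
    moveEndpoint (Fin.cons b e) = stp b + moveEndpoint e := by
  simp [moveEndpoint, Fin.sum_univ_succ, stp]

lemma nturns_cons {n : ℕ} (b : Bool) (e : Fin (n+1) → Bool) :
    nturns (Fin.cons b e) = (if (b != (List.ofFn e).headI) then 1 else 0) + nturns e := by
  have h : List.ofFn (Fin.cons b e) = b :: List.ofFn e := ofFn_cons b e
  obtain ⟨a, l, hl⟩ : ∃ a l, List.ofFn e = a :: l := by
    rcases List.exists_cons_of_ne_nil (l := List.ofFn e) (by simp) with ⟨a, l, hl⟩
    exact ⟨a, l, hl⟩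
  simp [nturns, h, hl, List.countP_cons]
  ring

lemma lst_cons {n : ℕ} (b : Bool) (e : Fin (n+1) → Bool) :
    lst (Fin.cons b e) = lst e := by
  obtain ⟨a, l, hl⟩ : ∃ a l, List.ofFn e = a :: l := by
    rcases List.exists_cons_of_ne_nil (l := List.ofFn e) (by simp) with ⟨a, l, hl⟩
    exact ⟨a, l, hl⟩
  simp [lst, ofFn_cons, hl]

lemma headI_ofFn {n : ℕ} (e : Fin (n+1) → Bool) : (List.ofFn e).headI = e 0 := by
  rw [List.ofFn_succ]; rfl

lemma sum_split (n : ℕ) (b c : Bool) (y : ℤ) :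
    (∑ e : Fin (n+1) → Bool,
      if moveEndpoint e = y ∧ lst e = c
      then (-Complex.I) ^ ((if (b != (List.ofFn e).headI) then 1 else 0) + nturns e) else 0)
    = W (n+1) b c y + (-Complex.I) * W (n+1) (!b) c y := by
  classical
  rw [W, W, Finset.mul_sum, ← Finset.sum_add_distrib]
  refine Finset.sum_congr rfl fun e _ => ?_
  simp only [headI_ofFn]
  by_cases h2 : moveEndpoint e = y ∧ lst e = c
  · by_cases h : e 0 = b
    · have hb : ¬ (e 0 = !b) := by simp [h]
      simp [h, hb, h2, pow_add]
    · have h' : e 0 = !b := by cases hb : e 0 <;> cases b <;> simp_all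
      simp [h, h', h2, pow_add]
  · rw [if_neg h2, if_neg (fun hc => h2 ⟨hc.1, hc.2.2⟩), if_neg (fun hc => h2 ⟨hc.1, hc.2.2⟩)]
    ring

noncomputable def F : ℕ → Bool → Bool → ℤ → ℂ
  | 0, _, _, _ => 0
  | 1, b, c, x => if b = c ∧ x = stp b then 1 else 0
  | (n+2), b, c, x => F (n+1) b c (x - stp b) + (-Complex.I) * F (n+1) (!b) c (x - stp b)

lemma W_succ (n : ℕ) (b c : Bool) (x : ℤ) :
    W (n+2) b c x = W (n+1) b c (x - stp b) + (-Complex.I) * W (n+1) (!b) c (x - stp b) := by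
  classical
  have e1 : W (n+2) b c x = ∑ p : Bool × (Fin (n+1) → Bool),
      (if moveEndpoint (Fin.cons p.1 p.2) = x ∧
          (List.ofFn (Fin.cons p.1 p.2)).headI = b ∧ lst (Fin.cons p.1 p.2) = c
       then (-Complex.I) ^ nturns (Fin.cons p.1 p.2) else 0) := by
    rw [W]
    exact (Equiv.sum_comp (Fin.consEquiv fun _ => Bool) _).symm
  rw [e1, Fintype.sum_prod_type, Fintype.sum_bool]
  simp only [moveEndpoint_cons, ofFn_cons, List.headI_cons, lst_cons, nturns_cons]
  rw [← sum_split n b c (x - stp b)]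
  cases b
  · rw [Finset.sum_eq_zero (fun e _ => by simp), zero_add]
    refine Finset.sum_congr rfl fun e _ => ?_
    have h2 : stp false + moveEndpoint e = x ↔ moveEndpoint e = x - stp false := by
      constructor <;> intro h <;> linarith
    simp [h2]
  · rw [Finset.sum_eq_zero (fun e (_ : e ∈ Finset.univ) =>
      (by simp : (if stp false + moveEndpoint e = x ∧ false = true ∧ lst e = c then
          (-Complex.I) ^ ((if (false != (List.ofFn e).headI) = true then 1 else 0) + nturns e)
        else 0) = 0)), add_zero]
    refine Finset.sum_congr rfl fun e _ => ?_
    have h2 : stp true + moveEndpoint e = x ↔ moveEndpoint e = x - stp true := by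
      constructor <;> intro h <;> linarith
    simp [h2]

lemma W_one (b c : Bool) (x : ℤ) : W 1 b c x = F 1 b c x := by
  classical
  rw [W, ← Equiv.sum_comp (Equiv.funUnique (Fin 1) Bool).symm]
  rw [Fintype.sum_bool]
  have h1 : ∀ b' : Bool, List.ofFn (fun _ : Fin 1 => b') = [b'] := fun b' => by
    simp [List.ofFn_succ]
  show (if moveEndpoint (fun _ => true) = x ∧ _ ∧ _ then _ else 0) +
    (if moveEndpoint (fun _ => false) = x ∧ _ ∧ _ then _ else 0) = _
  simp only [moveEndpoint, nturns, h1, lst, F, stp, Fin.sum_univ_one]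
  cases b <;> cases c <;> by_cases hx : x = 1 <;> by_cases hx' : x = -1 <;>
    simp_all <;> omega

lemma W_eq_F : ∀ n b c x, W (n+1) b c x = F (n+1) b c x := by
  intro n
  induction n with
  | zero => exact W_one
  | succ m ih => intro b c x; rw [W_succ, ih, ih]; rfl

lemma key_normSq (u w : ℂ) :
    normSq (u + (-I)*w) + normSq (w + (-I)*u) = 2*(normSq u + normSq w) := by
  simp [Complex.normSq_apply, Complex.add_re, Complex.add_im, Complex.mul_re, Complex.mul_im]
  ring

lemma F_supp : ∀ n : ℕ, ∀ b c : Bool, ∀ x : ℤ, (x < -(n:ℤ) ∨ (n:ℤ) < x) → F n b c x = 0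
  | 0, b, c, x, h => rfl
  | 1, b, c, x, h => by
      have : ¬ (x = stp b) := by cases b <;> simp [stp] <;> omega
      simp [F, this]
  | (n+2), b, c, x, h => by
      have h1 : x - stp b < -((n:ℤ)+1) ∨ ((n:ℤ)+1) < x - stp b := by
        cases b <;> simp [stp] at * <;> omega
      have e1 := F_supp (n+1) b c (x - stp b) (by push_cast; exact_mod_cast h1)
      have e2 := F_supp (n+1) (!b) c (x - stp b) (by push_cast; exact_mod_cast h1)
      show F (n+1) b c (x - stp b) + (-Complex.I) * F (n+1) (!b) c (x - stp b) = 0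
      rw [e1, e2]; ring

lemma F_symm : ∀ n : ℕ, ∀ b c : Bool, ∀ x : ℤ, F n (!b) (!c) (-x) = F n b c x
  | 0, b, c, x => rfl
  | 1, b, c, x => by
      have h1 : (-x = (-1:ℤ)) ↔ (x = 1) := by omega
      have h2 : (-x = (1:ℤ)) ↔ (x = -1) := by omega
      cases b <;> cases c <;> simp [F, stp, h1, h2]
  | (n+2), b, c, x => by
      show F (n+1) (!b) (!c) (-x - stp (!b)) + (-Complex.I) * F (n+1) (!(!b)) (!c) (-x - stp (!b))
        = F (n+1) b c (x - stp b) + (-Complex.I) * F (n+1) (!b) c (x - stp b)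
      have hs : -x - stp (!b) = -(x - stp b) := by cases b <;> simp [stp] <;> ring
      rw [hs, Bool.not_not]
      rw [show F (n+1) (!b) (!c) (-(x - stp b)) = F (n+1) b c (x - stp b) from F_symm (n+1) b c _]
      rw [show F (n+1) b (!c) (-(x - stp b)) = F (n+1) (!b) c (x - stp b) from by
        conv_rhs => rw [← F_symm (n+1) (!b) c (x - stp b)]
        rw [Bool.not_not]]

lemma F_parts : ∀ n : ℕ, ∀ b c : Bool, ∀ x : ℤ,
    (b = c → (F (n+1) b c x).im = 0) ∧ (b ≠ c → (F (n+1) b c x).re = 0)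
  | 0, b, c, x => by
      constructor <;> intro h <;> cases b <;> cases c <;> simp_all [F] <;> split <;> simp
  | (n+1), b, c, x => by
      have hrec : F (n+2) b c x
          = F (n+1) b c (x - stp b) + (-Complex.I) * F (n+1) (!b) c (x - stp b) := rfl
      have ih1 := F_parts n b c (x - stp b)
      have ih2 := F_parts n (!b) c (x - stp b)
      constructor
      · intro h
        have h1 : (F (n+1) b c (x - stp b)).im = 0 := ih1.1 h
        have h2 : (F (n+1) (!b) c (x - stp b)).re = 0 := ih2.2 (by subst h; cases b <;> simp)
        rw [hrec]
        simp [Complex.add_im, Complex.mul_im, Complex.mul_re, h1, h2]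
      · intro h
        have h1 : (F (n+1) b c (x - stp b)).re = 0 := ih1.2 h
        have h2 : (F (n+1) (!b) c (x - stp b)).im = 0 := ih2.1 (by cases b <;> cases c <;> simp_all)
        rw [hrec]
        simp [Complex.add_re, Complex.mul_re, Complex.mul_im, h1, h2]

lemma F_supp' (n : ℕ) (b c : Bool) (x : ℤ) (hx : x ∉ Finset.Icc (-(n:ℤ)) (n:ℤ)) :
    F n b c x = 0 := by
  apply F_supp n b c x
  simp [Finset.mem_Icc] at hx
  omega

lemma summable_nsF (n : ℕ) (b c : Bool) : Summable (fun x => normSq (F n b c x)) :=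
  summable_of_ne_finset_zero (s := Finset.Icc (-(n:ℤ)) (n:ℤ))
    (fun x hx => by rw [F_supp' n b c x hx]; simp)

lemma summable_comb (n : ℕ) (b b' c c' : Bool) :
    Summable (fun x => normSq (F n b c x + (-I) * F n b' c' x)) :=
  summable_of_ne_finset_zero (s := Finset.Icc (-(n:ℤ)) (n:ℤ))
    (fun x hx => by rw [F_supp' n b c x hx, F_supp' n b' c' x hx]; simp)

lemma F_rec_t (n : ℕ) (c : Bool) (x : ℤ) :
    F (n+2) true c x = F (n+1) true c (x-1) + (-I) * F (n+1) false c (x-1) := by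
  show F (n+1) true c (x - stp true) + _ = _
  norm_num [stp]

lemma F_rec_f (n : ℕ) (c : Bool) (x : ℤ) :
    F (n+2) false c x = F (n+1) false c (x+1) + (-I) * F (n+1) true c (x+1) := by
  show F (n+1) false c (x - stp false) + _ = _
  norm_num [stp]

noncomputable def P2 (n : ℕ) (c : Bool) (x : ℤ) : ℝ :=
  normSq (F n true c x) + normSq (F n false c x)

lemma summable_P2 (n : ℕ) (c : Bool) : Summable (P2 n c) :=
  (summable_nsF n true c).add (summable_nsF n false c)

lemma Tc_succ (n : ℕ) (c : Bool) : ∑' x, P2 (n+2) c x = 2 * ∑' x, P2 (n+1) c x := by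
  have h1 : ∑' x : ℤ, normSq (F (n+2) true c x)
      = ∑' x : ℤ, normSq (F (n+1) true c x + (-I) * F (n+1) false c x) := by
    rw [← (Equiv.subRight (1:ℤ)).tsum_eq
      (fun y => normSq (F (n+1) true c y + (-I) * F (n+1) false c y))]
    exact tsum_congr fun x => by rw [F_rec_t]; rfl
  have h2 : ∑' x : ℤ, normSq (F (n+2) false c x)
      = ∑' x : ℤ, normSq (F (n+1) false c x + (-I) * F (n+1) true c x) := by
    rw [← (Equiv.addRight (1:ℤ)).tsum_eq
      (fun y => normSq (F (n+1) false c y + (-I) * F (n+1) true c y))]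
    exact tsum_congr fun x => by rw [F_rec_f]; rfl
  have h3 : ∑' x, P2 (n+2) c x
      = (∑' x : ℤ, normSq (F (n+2) true c x)) + ∑' x : ℤ, normSq (F (n+2) false c x) :=
    Summable.tsum_add (summable_nsF (n+2) true c) (summable_nsF (n+2) false c)
  rw [h3, h1, h2, ← Summable.tsum_add (summable_comb (n+1) true false c c) (summable_comb (n+1) false true c c)]
  rw [← tsum_mul_left]
  exact tsum_congr fun x => key_normSq _ _

lemma Tc_one (c : Bool) : ∑' x, P2 1 c x = 1 := by
  rw [tsum_eq_sum (s := ({-1, 1} : Finset ℤ)) (fun x hx => by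
    have hx1 : ¬ (x = (1:ℤ)) := by simp at hx; omega
    have hx2 : ¬ (x = (-1:ℤ)) := by simp at hx; omega
    simp [P2, F, stp, hx1, hx2])]
  cases c <;> norm_num [P2, F, stp]

lemma Tc_pow (c : Bool) : ∀ n : ℕ, ∑' x, P2 (n+1) c x = 2^n := by
  intro n
  induction n with
  | zero => simpa using Tc_one c
  | succ m ih => rw [Tc_succ, ih]; ring

lemma tsum_flip (n : ℕ) (c : Bool) :
    ∑' x : ℤ, normSq (F n false c x) = ∑' x : ℤ, normSq (F n true (!c) x) := by
  rw [← (Equiv.neg ℤ).tsum_eq (fun x => normSq (F n false c x))]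
  refine tsum_congr fun x => ?_
  have h := F_symm n true (!c) x
  rw [Bool.not_not] at h
  simp only [Equiv.neg_apply]
  rw [show (!true) = false from rfl] at h
  rw [h]

lemma S_val (n : ℕ) :
    (∑' x : ℤ, normSq (F (n+1) true true x)) + (∑' x : ℤ, normSq (F (n+1) true false x))
      = 2^n := by
  have e1 : ∑' x, P2 (n+1) true x
      = (∑' x : ℤ, normSq (F (n+1) true true x)) + ∑' x : ℤ, normSq (F (n+1) false true x) :=
    Summable.tsum_add (summable_nsF _ _ _) (summable_nsF _ _ _)
  rw [tsum_flip (n+1) true, show (!true) = false from rfl] at e1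
  rw [← e1, Tc_pow]

lemma normSq_add_of (u w : ℂ) (h1 : u.im = 0) (h2 : w.re = 0) :
    normSq (u + w) = normSq u + normSq w := by
  simp [Complex.normSq_apply, h1, h2]

lemma cpaths_sum (x t : ℤ) :
    ∑ d ∈ cpaths x t, (-Complex.I)^(nturns d)
      = W t.toNat true true x + W t.toNat true false x := by
  classical
  rw [cpaths, Finset.sum_filter, W, W, ← Finset.sum_add_distrib]
  refine Finset.sum_congr rfl fun d _ => ?_
  by_cases hP : moveEndpoint d = x ∧ (List.ofFn d).headI = true
  · rcases hP with ⟨h1, h2⟩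
    cases hl : lst d
    · rw [if_pos ⟨h1, h2⟩, if_neg (by simp), if_pos ⟨h1, h2, rfl⟩, zero_add]
    · rw [if_pos ⟨h1, h2⟩, if_pos ⟨h1, h2, rfl⟩, if_neg (by simp), add_zero]
  · rw [if_neg hP, if_neg (fun hc => hP ⟨hc.1, hc.2.1⟩), if_neg (fun hc => hP ⟨hc.1, hc.2.1⟩)]
    ring

/-- Probability conservation: for each integer `t ≥ 1`, `∑_{x ∈ ℤ} P(x,t) = 1`. -/
theorem probability_conservation (t : ℤ) (ht : 1 ≤ t) :
    ∑' x : ℤ, ‖a x t‖ ^ 2 = 1 := by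
  obtain ⟨m, hm⟩ : ∃ m : ℕ, t.toNat = m + 1 := ⟨(t-1).toNat, by omega⟩
  have ha : ∀ x : ℤ, ‖a x t‖^2
      = (2:ℝ)^((1:ℤ)-t) * (normSq (F (m+1) true true x) + normSq (F (m+1) true false x)) := by
    intro x
    have hs : ∑ d ∈ cpaths x t, (-Complex.I)^(nturns d)
        = F (m+1) true true x + F (m+1) true false x := by
      rw [cpaths_sum]
      rw [show t.toNat = m + 1 from hm]
      rw [W_eq_F, W_eq_F]
    simp only [a]
    rw [hs, Complex.sq_norm, map_mul, map_mul]
    have h1 : normSq ((Real.sqrt 2 : ℂ)^(1-t)) = (2:ℝ)^((1:ℤ)-t) := by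
      rw [map_zpow₀, Complex.normSq_ofReal, Real.mul_self_sqrt (by norm_num)]
    have h2 : normSq (F (m+1) true true x + F (m+1) true false x)
        = normSq (F (m+1) true true x) + normSq (F (m+1) true false x) :=
      normSq_add_of _ _ ((F_parts m true true x).1 rfl) ((F_parts m true false x).2 (by simp))
    rw [h1, h2, Complex.normSq_I]
    ring
  rw [tsum_congr ha, tsum_mul_left,
    Summable.tsum_add (summable_nsF _ _ _) (summable_nsF _ _ _), S_val]
  rw [show ((2:ℝ)^m) = (2:ℝ)^((m:ℤ)) from (zpow_natCast 2 m).symm,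
    ← zpow_add₀ (by norm_num : (2:ℝ) ≠ 0),
    show (1:ℤ)-t+(m:ℤ) = 0 by omega]
  norm_num
end

section
/- For each integer x and each integer t ≥ 1 we have a₁(x,t) = a₁(−x,t) and a₂(x,t) + a₁(x,t) = a₂(2−x,t) + a₁(2−x,t). -/
open scoped BigOperators

def nt : List Bool → ℕ
  | a :: b :: l => (if a != b then 1 else 0) + nt (b :: l)
  | _ => 0

lemma countP_zip_tail : ∀ l : List Bool,
    (l.zip l.tail).countP (fun p => p.1 != p.2) = nt l
  | [] => rfl
  | [_] => rfl
  | a :: b :: l => by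
      have := countP_zip_tail (b :: l)
      simp only [List.tail_cons, List.zip_cons_cons, List.countP_cons, nt] at *
      omega

lemma nturns_eq {n : ℕ} (d : Fin n → Bool) : nturns d = nt (List.ofFn d) :=
  countP_zip_tail _

lemma nt_cons (a : Bool) (m : List Bool) (h : m ≠ []) :
    nt (a :: m) = (if a != m.headI then 1 else 0) + nt m := by
  cases m with
  | nil => exact absurd rfl h
  | cons b l => rfl

lemma nt_concat : ∀ (l : List Bool) (c b : Bool),
    nt ((l ++ [c]) ++ [b]) = nt (l ++ [c]) + (if c != b then 1 else 0)
  | [], c, b => by simp [nt]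
  | a :: l, c, b => by
      have h1 : (l ++ [c]) ++ [b] ≠ [] := by simp
      have h2 : l ++ [c] ≠ [] := by simp
      have hh : ((l ++ [c]) ++ [b]).headI = (l ++ [c]).headI := by
        cases l <;> simp
      rw [show ((a :: l ++ [c]) ++ [b]) = a :: ((l ++ [c]) ++ [b]) by simp,
        nt_cons a _ h1, show (a :: l ++ [c]) = a :: (l ++ [c]) by simp,
        nt_cons a _ h2, hh, nt_concat l c b]
      omega

lemma ofFn_snoc {n : ℕ} (d : Fin n → Bool) (b : Bool) :
    List.ofFn (Fin.snoc d b) = List.ofFn d ++ [b] := by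
  rw [List.ofFn_succ']
  simp [Fin.snoc_castSucc, List.concat_eq_append]

lemma moveEndpoint_snoc {n : ℕ} (d : Fin n → Bool) (b : Bool) :
    moveEndpoint (Fin.snoc d b) = moveEndpoint d + (if b then 1 else -1) := by
  unfold moveEndpoint
  rw [Fin.sum_univ_castSucc]
  simp [Fin.snoc_castSucc, Fin.snoc_last]

lemma nturns_snoc {n : ℕ} (d : Fin (n+1) → Bool) (b : Bool) :
    nturns (Fin.snoc d b) = nturns d + (if d (Fin.last n) != b then 1 else 0) := by
  rw [nturns_eq, nturns_eq, ofFn_snoc]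
  have h : List.ofFn d = List.ofFn (fun i : Fin n => d i.castSucc) ++ [d (Fin.last n)] := by
    rw [List.ofFn_succ']; simp [List.concat_eq_append]
  rw [h, nt_concat]

noncomputable def G (x : ℤ) (m : ℕ) (b : Bool) : ℂ :=
  ∑ d : Fin (m+1) → Bool,
    if moveEndpoint d = x ∧ d 0 = true ∧ d (Fin.last m) = b
    then (-Complex.I) ^ nturns d else 0

lemma G_zero (x : ℤ) (b : Bool) :
    G x 0 b = if x = 1 ∧ b = true then 1 else 0 := by
  unfold G
  rw [show (Finset.univ : Finset (Fin 1 → Bool)) = {![true], ![false]} by decide]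
  rw [Finset.sum_insert (by decide), Finset.sum_singleton]
  have e1 : moveEndpoint ![true] = 1 := by decide
  have e2 : moveEndpoint ![false] = -1 := by decide
  have t1 : nturns (![true] : Fin 1 → Bool) = 0 := by decide
  simp only [e1, e2, t1]
  have : (Fin.last 0) = (0 : Fin 1) := rfl
  by_cases hx : x = 1 <;> by_cases hb : b = true <;>
    simp_all [Matrix.cons_val_zero] <;> omega

lemma G_succ_aux (x : ℤ) (m : ℕ) (b : Bool) :
    G x (m+1) b = ∑ d : Fin (m+1) → Bool,
      if moveEndpoint d = x - (if b then 1 else -1) ∧ d 0 = true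
      then (-Complex.I) ^ nturns d * (-Complex.I) ^ (if d (Fin.last m) != b then 1 else 0)
      else 0 := by
  unfold G
  rw [← Fintype.sum_equiv (Fin.snocEquiv (fun _ : Fin (m+2) => Bool))
      _ (fun d => if moveEndpoint d = x ∧ d 0 = true ∧ d (Fin.last (m+1)) = b
          then (-Complex.I) ^ nturns d else 0) (fun p => rfl)]
  rw [Fintype.sum_prod_type]
  have key : ∀ c : Bool, ∀ d : Fin (m+1) → Bool,
      (if moveEndpoint ((Fin.snocEquiv (fun _ : Fin (m+2) => Bool)) (c, d)) = x ∧
          ((Fin.snocEquiv (fun _ : Fin (m+2) => Bool)) (c, d)) 0 = true ∧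
          ((Fin.snocEquiv (fun _ : Fin (m+2) => Bool)) (c, d)) (Fin.last (m+1)) = b
        then (-Complex.I) ^ nturns ((Fin.snocEquiv (fun _ : Fin (m+2) => Bool)) (c, d)) else 0)
      = (if moveEndpoint d = x - (if c then 1 else -1) ∧ d 0 = true ∧ c = b
          then (-Complex.I) ^ nturns d * (-Complex.I) ^ (if d (Fin.last m) != c then 1 else 0)
          else 0) := by
    intro c d
    have hE : (Fin.snocEquiv (fun _ : Fin (m+2) => Bool)) (c, d) = Fin.snoc d c := rfl
    rw [hE, moveEndpoint_snoc, nturns_snoc, Fin.snoc_last]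
    have h0 : (Fin.snoc (α := fun _ => Bool) d c) 0 = d 0 := by
      have : (0 : Fin (m+2)) = Fin.castSucc 0 := rfl
      rw [this, Fin.snoc_castSucc]
    rw [h0, pow_add]
    have hme : (moveEndpoint d + (if c then 1 else -1) = x) ↔
        (moveEndpoint d = x - (if c then 1 else -1)) := by omega
    simp only [hme]
  simp only [key]
  rw [Fintype.sum_bool]
  cases b
  · simp
  · simp

lemma G_succ (x : ℤ) (m : ℕ) (b : Bool) :
    G x (m+1) b =
      (-Complex.I) ^ (if true != b then 1 else 0) * G (x - (if b then 1 else -1)) m true +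
      (-Complex.I) ^ (if false != b then 1 else 0) * G (x - (if b then 1 else -1)) m false := by
  rw [G_succ_aux]
  unfold G
  rw [Finset.mul_sum, Finset.mul_sum, ← Finset.sum_add_distrib]
  refine Fintype.sum_congr _ _ fun d => ?_
  by_cases hA : moveEndpoint d = x - (if b then 1 else -1) ∧ d 0 = true
  · cases hl : d (Fin.last m)
    · simp [hA, hl]; ring
    · simp [hA, hl]; ring
  · have h1 : ¬ (moveEndpoint d = x - (if b then 1 else -1) ∧ d 0 = true ∧
        d (Fin.last m) = true) := by tauto
    have h2 : ¬ (moveEndpoint d = x - (if b then 1 else -1) ∧ d 0 = true ∧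
        d (Fin.last m) = false) := by tauto
    simp [hA, h1, h2]

lemma G_inv : ∀ (m : ℕ) (x : ℤ),
    (G x m true).im = 0 ∧ (G x m false).re = 0 ∧
    G x m false = G (-x) m false ∧
    G x m true + Complex.I * G x m false
      = G (2-x) m true + Complex.I * G (2-x) m false := by
  intro m
  induction m with
  | zero =>
      intro x
      simp only [G_zero]
      have h3 : (2 - x = 1) ↔ (x = 1) := by omega
      refine ⟨by split_ifs <;> simp, by simp, by simp, by simp [h3]⟩
  | succ m ih =>
      intro x
      have Rt : ∀ y : ℤ, G y (m+1) true
          = G (y-1) m true + (-Complex.I) * G (y-1) m false := by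
        intro y; rw [G_succ]; norm_num
      have Rf : ∀ y : ℤ, G y (m+1) false
          = (-Complex.I) * G (y+1) m true + G (y+1) m false := by
        intro y; rw [G_succ]; norm_num [sub_neg_eq_add]
      have c2p : G (x+1) m true + Complex.I * G (x+1) m false
          = G (1-x) m true + Complex.I * G (1-x) m false := by
        have h := (ih (x+1)).2.2.2
        rwa [show (2 - (x+1) : ℤ) = 1 - x by ring] at h
      have c2m : G (x-1) m true + Complex.I * G (x-1) m false
          = G (3-x) m true + Complex.I * G (3-x) m false := by
        have h := (ih (x-1)).2.2.2
        rwa [show (2 - (x-1) : ℤ) = 3 - x by ring] at h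
      have c1m : G (x-1) m false = G (1-x) m false := by
        have h := (ih (x-1)).2.2.1
        rwa [show (-(x-1) : ℤ) = 1 - x by ring] at h
      refine ⟨?_, ?_, ?_, ?_⟩
      · rw [Rt]
        have h1 := (ih (x-1)).1
        have h2 := (ih (x-1)).2.1
        simp [Complex.add_im, Complex.mul_im, h1, h2]
      · rw [Rf]
        have h1 := (ih (x+1)).1
        have h2 := (ih (x+1)).2.1
        simp [Complex.add_re, Complex.mul_re, h1, h2]
      · rw [Rf, Rf, show (-x + 1 : ℤ) = 1 - x by ring]
        linear_combination (-Complex.I) * c2p + (G (x+1) m false - G (1-x) m false) * Complex.I_sq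
      · rw [Rt, Rf, Rt (2-x), Rf (2-x),
          show (2 - x - 1 : ℤ) = 1 - x by ring, show (2 - x + 1 : ℤ) = 3 - x by ring]
        linear_combination c2p + c2m + (-2*Complex.I) * c1m + (G (3-x) m true - G (x+1) m true) * Complex.I_sq

lemma sum_split_s2 (x : ℤ) (m : ℕ) :
    (∑ d ∈ Finset.univ.filter
        (fun d : Fin (m+1) → Bool => moveEndpoint d = x ∧ (List.ofFn d).headI = true),
      (-Complex.I) ^ nturns d) = G x m true + G x m false := by
  unfold G
  rw [Finset.sum_filter, ← Finset.sum_add_distrib]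
  refine Fintype.sum_congr _ _ fun d => ?_
  have hh : (List.ofFn d).headI = d 0 := by rw [List.ofFn_succ]; rfl
  rw [hh]
  by_cases hA : moveEndpoint d = x ∧ d 0 = true
  · cases hl : d (Fin.last m) <;> simp [hA, hl]
  · have h1 : ¬ (moveEndpoint d = x ∧ d 0 = true ∧ d (Fin.last m) = true) := by tauto
    have h2 : ¬ (moveEndpoint d = x ∧ d 0 = true ∧ d (Fin.last m) = false) := by tauto
    simp [hA, h1, h2]

lemma sum_split' (x : ℤ) (k m : ℕ) (hk : k = m + 1) :
    (∑ d ∈ Finset.univ.filter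
        (fun d : Fin k → Bool => moveEndpoint d = x ∧ (List.ofFn d).headI = true),
      (-Complex.I) ^ nturns d) = G x m true + G x m false := by
  subst hk; exact sum_split_s2 x m

lemma a_eq (x t : ℤ) (ht : 1 ≤ t) :
    a x t = (Real.sqrt 2 : ℂ) ^ (1 - t) * Complex.I *
      (G x (t-1).toNat true + G x (t-1).toNat false) := by
  unfold a cpaths
  rw [sum_split' x t.toNat (t-1).toNat (by omega)]

/-- Symmetry of the amplitudes in the basic model. -/
theorem symmetry (x t : ℤ) (ht : 1 ≤ t) :
    (a x t).re = (a (-x) t).re ∧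
    (a x t).im + (a x t).re = (a (2 - x) t).im + (a (2 - x) t).re := by
  set n := (t-1).toNat with hn
  set w : ℝ := (Real.sqrt 2) ^ (1 - t) with hw
  have hcast : (Real.sqrt 2 : ℂ) ^ (1 - t) = (w : ℂ) := by
    rw [hw, Complex.ofReal_zpow]
  have hre : ∀ y : ℤ, (a y t).re
      = -w * ((G y n true).im + (G y n false).im) := by
    intro y
    rw [a_eq y t ht, hcast, show ((t-1).toNat) = n from rfl]
    simp only [Complex.mul_re, Complex.mul_im, Complex.ofReal_re, Complex.ofReal_im,
      Complex.I_re, Complex.I_im, Complex.add_re, Complex.add_im]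
    ring
  have him : ∀ y : ℤ, (a y t).im
      = w * ((G y n true).re + (G y n false).re) := by
    intro y
    rw [a_eq y t ht, hcast, show ((t-1).toNat) = n from rfl]
    simp only [Complex.mul_re, Complex.mul_im, Complex.ofReal_re, Complex.ofReal_im,
      Complex.I_re, Complex.I_im, Complex.add_re, Complex.add_im]
    ring
  obtain ⟨i1, r1, f1, c1⟩ := G_inv n x
  obtain ⟨i2, r2, -, -⟩ := G_inv n (-x)
  obtain ⟨i3, r3, -, -⟩ := G_inv n (2-x)
  constructor
  · rw [hre, hre, i1, i2, f1]
  · rw [hre, hre, him, him, i1, i3, r1, r3]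
    have h := congrArg Complex.re c1
    simp only [Complex.add_re, Complex.mul_re, Complex.I_re, Complex.I_im] at h
    rw [r1, r3] at h
    linear_combination w * h
end

section
/- For each (x,t) ∈ εℤ² with t > 0: a₁(x,t+ε,m,ε) = (1/√(1+m²ε²))·(a₁(x+ε,t,m,ε) + mε·a₂(x+ε,t,m,ε)) and a₂(x,t+ε,m,ε) = (1/√(1+m²ε²))·(a₂(x−ε,t,m,ε) − mε·a₁(x−ε,t,m,ε)). -/
open scoped BigOperators

/-- Feynman checkers amplitude with mass: `a(x·ε, t·ε, m, ε)` written in lattice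
coordinates, i.e. `am m ε x t = (1+m²ε²)^((1-t)/2) * i * ∑ₛ (-i·m·ε)^turns(s)`. -/
noncomputable def am (m ε : ℝ) (x t : ℤ) : ℂ :=
  (Real.sqrt (1 + m ^ 2 * ε ^ 2) : ℂ) ^ (1 - t) * Complex.I *
    ∑ d ∈ cpaths x t, (-Complex.I * (m * ε)) ^ nturns d

namespace FC

/-! ### Turns of lists of moves -/

def lturns (l : List Bool) : ℕ := (l.zip l.tail).countP fun p => p.1 != p.2

lemma nturns_eq {n : ℕ} (d : Fin n → Bool) : nturns d = lturns (List.ofFn d) := rfl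

lemma lturns_cons (b : Bool) (L : List Bool) :
    lturns (b :: L) = (if b != L.headD b then 1 else 0) + lturns L := by
  cases L with
  | nil => simp [lturns]
  | cons x t => simp [lturns, List.countP_cons]; ring

lemma lturns_append_pair (l : List Bool) (a c : Bool) :
    lturns (l ++ [a, c]) = lturns (l ++ [a]) + (if a != c then 1 else 0) := by
  induction l with
  | nil => cases a <;> cases c <;> simp [lturns]
  | cons b l ih =>
      have hh : (l ++ [a, c]).headD b = (l ++ [a]).headD b := by cases l <;> simp
      rw [List.cons_append, lturns_cons, ih, List.cons_append, lturns_cons, hh]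
      ring

lemma lturns_parity (l : List Bool) (a : Bool) :
    Even (lturns (l ++ [a])) ↔ (l ++ [a]).headI = a := by
  induction l with
  | nil => simp [lturns]
  | cons h l ih =>
      rw [List.cons_append, lturns_cons]
      have hne : l ++ [a] ≠ [] := by simp
      have hhd : (l ++ [a]).headD h = (l ++ [a]).headI := by
        cases hl : l ++ [a] with
        | nil => exact absurd hl hne
        | cons x t => simp
      rw [hhd, List.headI_cons]
      by_cases hc : h = (l ++ [a]).headI
      · simp [hc, ih]
      · have h1 : (h != (l ++ [a]).headI) = true := by simpa [bne_iff_ne] using hc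
        simp only [h1, if_true, add_comm 1, Nat.even_add_one, ih]
        revert hc
        generalize (l ++ [a]).headI = H
        cases h <;> cases a <;> cases H <;> simp

/-! ### Snoc lemmas for paths -/

def lastMove {n : ℕ} (p : Fin n → Bool) : Bool := (List.ofFn p).getLastD true

lemma ofFn_snoc {n : ℕ} (p : Fin n → Bool) (b : Bool) :
    List.ofFn (Fin.snoc p b : Fin (n + 1) → Bool) = List.ofFn p ++ [b] := by
  rw [List.ofFn_succ']
  simp [Fin.snoc_castSucc, List.concat_eq_append]

lemma ofFn_eq_concat {m : ℕ} (p : Fin (m + 1) → Bool) :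
    List.ofFn p = (List.ofFn fun i : Fin m => p i.castSucc) ++ [p (Fin.last m)] := by
  rw [List.ofFn_succ', List.concat_eq_append]

lemma lastMove_eq {m : ℕ} (p : Fin (m + 1) → Bool) : lastMove p = p (Fin.last m) := by
  rw [lastMove, ofFn_eq_concat p, List.getLastD_concat]

lemma nturns_snoc {m : ℕ} (p : Fin (m + 1) → Bool) (b : Bool) :
    nturns (Fin.snoc p b : Fin (m + 2) → Bool)
      = nturns p + (if lastMove p != b then 1 else 0) := by
  rw [lastMove_eq, nturns_eq, nturns_eq, ofFn_snoc, ofFn_eq_concat p, List.append_assoc]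
  simpa using lturns_append_pair _ (p (Fin.last m)) b

lemma even_nturns {m : ℕ} (p : Fin (m + 1) → Bool) :
    Even (nturns p) ↔ (List.ofFn p).headI = lastMove p := by
  rw [lastMove_eq, nturns_eq, ofFn_eq_concat p, lturns_parity]

lemma moveEndpoint_snoc {n : ℕ} (p : Fin n → Bool) (b : Bool) :
    moveEndpoint (Fin.snoc p b : Fin (n + 1) → Bool)
      = moveEndpoint p + (if b then 1 else -1) := by
  unfold moveEndpoint
  rw [Fin.sum_univ_castSucc]
  simp

lemma headI_ofFn_snoc {m : ℕ} (p : Fin (m + 1) → Bool) (b : Bool) :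
    (List.ofFn (Fin.snoc p b : Fin (m + 2) → Bool)).headI = (List.ofFn p).headI := by
  rw [ofFn_snoc, List.ofFn_succ]
  simp

/-! ### Complex number computations -/

lemma sq_eq (r : ℝ) : (-Complex.I * r) ^ 2 = ((-(r ^ 2) : ℝ) : ℂ) := by
  push_cast
  ring_nf
  simp [Complex.I_sq]

lemma re_even {k : ℕ} (hk : Even k) (r : ℝ) :
    (Complex.I * (-Complex.I * r) ^ k).re = 0 := by
  obtain ⟨j, rfl⟩ := hk
  rw [← two_mul, pow_mul, sq_eq, ← Complex.ofReal_pow]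
  simp only [Complex.mul_re, Complex.I_re, Complex.I_im, Complex.ofReal_re,
    Complex.ofReal_im]
  ring

lemma im_odd {k : ℕ} (hk : Odd k) (r : ℝ) :
    (Complex.I * (-Complex.I * r) ^ k).im = 0 := by
  obtain ⟨j, rfl⟩ := hk
  rw [pow_succ, pow_mul, sq_eq, ← Complex.ofReal_pow]
  have : Complex.I * (((((-(r ^ 2)) ^ j : ℝ)) : ℂ) * (-Complex.I * r))
      = ((((-(r ^ 2)) ^ j * r : ℝ)) : ℂ) := by
    push_cast
    ring_nf
    simp [Complex.I_sq]
    try ring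
  rw [this, Complex.ofReal_im]

lemma step_re (k : ℕ) (r : ℝ) :
    (Complex.I * (-Complex.I * r) ^ (k + 1)).re
      = r * (Complex.I * (-Complex.I * r) ^ k).im := by
  rw [pow_succ, show Complex.I * ((-Complex.I * r) ^ k * (-Complex.I * r))
      = Complex.I * (-Complex.I * r) ^ k * (-Complex.I * (r : ℂ)) by ring]
  simp only [Complex.mul_im, Complex.mul_re, Complex.I_re, Complex.I_im,
    Complex.ofReal_re, Complex.ofReal_im, Complex.neg_re, Complex.neg_im]
  ring

lemma step_im (k : ℕ) (r : ℝ) :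
    (Complex.I * (-Complex.I * r) ^ (k + 1)).im
      = -r * (Complex.I * (-Complex.I * r) ^ k).re := by
  rw [pow_succ, show Complex.I * ((-Complex.I * r) ^ k * (-Complex.I * r))
      = Complex.I * (-Complex.I * r) ^ k * (-Complex.I * (r : ℂ)) by ring]
  simp only [Complex.mul_im, Complex.mul_re, Complex.I_re, Complex.I_im,
    Complex.ofReal_re, Complex.ofReal_im, Complex.neg_re, Complex.neg_im]
  ring

/-- Per-path computation for a final move to the right (`true`): the term is purely
imaginary. -/
lemma term_true_re {m : ℕ} (p : Fin (m + 1) → Bool) (hp : (List.ofFn p).headI = true)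
    (r : ℝ) :
    (Complex.I * (-Complex.I * r) ^ (nturns p + if lastMove p != true then 1 else 0)).re
      = 0 := by
  cases hb : lastMove p with
  | true =>
      have he : Even (nturns p) := (even_nturns p).2 (by rw [hp, hb])
      simpa [hb] using re_even he r
  | false =>
      have ho : Odd (nturns p) := by
        rw [Nat.not_even_iff_odd.symm, even_nturns p, hp, hb]; simp
      rw [if_pos (by simp [hb]), step_re, im_odd ho, mul_zero]

lemma term_true_im {m : ℕ} (p : Fin (m + 1) → Bool) (hp : (List.ofFn p).headI = true)
    (r : ℝ) :
    (Complex.I * (-Complex.I * r) ^ (nturns p + if lastMove p != true then 1 else 0)).im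
      = (Complex.I * (-Complex.I * r) ^ nturns p).im
        - r * (Complex.I * (-Complex.I * r) ^ nturns p).re := by
  cases hb : lastMove p with
  | true =>
      have he : Even (nturns p) := (even_nturns p).2 (by rw [hp, hb])
      rw [re_even he r]
      simp [hb]
  | false =>
      have ho : Odd (nturns p) := by
        rw [Nat.not_even_iff_odd.symm, even_nturns p, hp, hb]; simp
      rw [if_pos (by simp [hb]), step_im, im_odd ho]
      ring

/-- Per-path computation for a final move to the left (`false`): the term is real. -/
lemma term_false_im {m : ℕ} (p : Fin (m + 1) → Bool) (hp : (List.ofFn p).headI = true)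
    (r : ℝ) :
    (Complex.I * (-Complex.I * r) ^ (nturns p + if lastMove p != false then 1 else 0)).im
      = 0 := by
  cases hb : lastMove p with
  | false =>
      have ho : Odd (nturns p) := by
        rw [Nat.not_even_iff_odd.symm, even_nturns p, hp, hb]; simp
      simpa [hb] using im_odd ho r
  | true =>
      have he : Even (nturns p) := (even_nturns p).2 (by rw [hp, hb])
      rw [if_pos (by simp [hb]), step_im, re_even he, mul_zero]

lemma term_false_re {m : ℕ} (p : Fin (m + 1) → Bool) (hp : (List.ofFn p).headI = true)
    (r : ℝ) :
    (Complex.I * (-Complex.I * r) ^ (nturns p + if lastMove p != false then 1 else 0)).re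
      = (Complex.I * (-Complex.I * r) ^ nturns p).re
        + r * (Complex.I * (-Complex.I * r) ^ nturns p).im := by
  cases hb : lastMove p with
  | false =>
      have ho : Odd (nturns p) := by
        rw [Nat.not_even_iff_odd.symm, even_nturns p, hp, hb]; simp
      rw [im_odd ho r]
      simp [hb]
  | true =>
      have he : Even (nturns p) := (even_nturns p).2 (by rw [hp, hb])
      rw [if_pos (by simp [hb]), step_re, re_even he]
      ring

/-! ### Splitting the sum over paths by the last move -/

lemma sum_cpaths_succ (x : ℤ) (M : ℕ) (f : ℕ → ℂ) :
    ∑ d ∈ cpaths x ((M : ℤ) + 2), f (nturns d)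
      = (∑ p ∈ cpaths (x - 1) ((M : ℤ) + 1),
            f (nturns p + if lastMove p != true then 1 else 0))
        + ∑ p ∈ cpaths (x + 1) ((M : ℤ) + 1),
            f (nturns p + if lastMove p != false then 1 else 0) := by
  rw [cpaths, Finset.sum_filter]
  rw [show (∑ d : Fin (((M : ℤ) + 2)).toNat → Bool,
        if moveEndpoint d = x ∧ (List.ofFn d).headI = true then f (nturns d) else 0)
      = ∑ pb : Bool × (Fin (M + 1) → Bool),
        (fun d : Fin (M + 2) → Bool =>
          if moveEndpoint d = x ∧ (List.ofFn d).headI = true then f (nturns d) else 0)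
          (Fin.snocEquiv (fun _ => Bool) pb)
      from (Equiv.sum_comp (Fin.snocEquiv (fun _ => Bool)) _).symm]
  rw [Fintype.sum_prod_type, Fintype.sum_bool]
  have hsplit : ∀ (b : Bool) (p : Fin (M + 1) → Bool),
      (fun d : Fin (M + 2) → Bool =>
        if moveEndpoint d = x ∧ (List.ofFn d).headI = true then f (nturns d) else 0)
        (Fin.snocEquiv (fun _ => Bool) (b, p))
      = if moveEndpoint p = x - (if b then 1 else -1) ∧ (List.ofFn p).headI = true
          then f (nturns p + if lastMove p != b then 1 else 0) else 0 := by
    intro b p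
    have he : (Fin.snocEquiv (fun _ => Bool) (b, p)) = (Fin.snoc p b : Fin (M + 2) → Bool) := by
      funext i; simp [Fin.snocEquiv]
    simp only [he, moveEndpoint_snoc, headI_ofFn_snoc, nturns_snoc, eq_sub_iff_add_eq]
  simp only [hsplit]
  rw [cpaths, cpaths, Finset.sum_filter, Finset.sum_filter]
  norm_num
  rfl

end FC

/-- Dirac equation for the model with mass. -/
theorem dirac_equation_mass (m ε : ℝ) (hε : 0 < ε) (hm : 0 ≤ m) (x t : ℤ) (ht : 0 < t) :
    (am m ε x (t + 1)).re =
      (1 / Real.sqrt (1 + m ^ 2 * ε ^ 2)) *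
        ((am m ε (x + 1) t).re + m * ε * (am m ε (x + 1) t).im) ∧
    (am m ε x (t + 1)).im =
      (1 / Real.sqrt (1 + m ^ 2 * ε ^ 2)) *
        ((am m ε (x - 1) t).im - m * ε * (am m ε (x - 1) t).re) := by
  have h1 : (0:ℝ) < 1 + m ^ 2 * ε ^ 2 := by positivity
  set c := Real.sqrt (1 + m ^ 2 * ε ^ 2) with hcdef
  have hc : 0 < c := Real.sqrt_pos.2 h1
  obtain ⟨M, rfl⟩ : ∃ M : ℕ, t = (M : ℤ) + 1 := ⟨(t - 1).toNat, by omega⟩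
  have hcast : ((m : ℂ) * (ε : ℂ)) = ((m * ε : ℝ) : ℂ) := by push_cast; ring
  have hamre : ∀ y : ℤ, am m ε y ((M : ℤ) + 1)
      = ((c ^ (-(M : ℤ)) : ℝ) : ℂ) *
          ∑ p ∈ cpaths y ((M : ℤ) + 1),
            Complex.I * (-Complex.I * ((m * ε : ℝ) : ℂ)) ^ nturns p := by
    intro y
    unfold am
    rw [hcast, show (1 - ((M : ℤ) + 1)) = -(M : ℤ) by ring, Complex.ofReal_zpow,
      mul_assoc, Finset.mul_sum]
  have htop : am m ε x ((M : ℤ) + 1 + 1)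
      = ((c ^ (-(M : ℤ) - 1) : ℝ) : ℂ) *
          ((∑ p ∈ cpaths (x - 1) ((M : ℤ) + 1),
              Complex.I * (-Complex.I * ((m * ε : ℝ) : ℂ))
                ^ (nturns p + if FC.lastMove p != true then 1 else 0))
           + ∑ p ∈ cpaths (x + 1) ((M : ℤ) + 1),
              Complex.I * (-Complex.I * ((m * ε : ℝ) : ℂ))
                ^ (nturns p + if FC.lastMove p != false then 1 else 0)) := by
    rw [show (M : ℤ) + 1 + 1 = (M : ℤ) + 2 by ring]
    unfold am
    rw [hcast, show (1 - ((M : ℤ) + 2)) = -(M : ℤ) - 1 by ring, Complex.ofReal_zpow,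
      mul_assoc, Finset.mul_sum,
      FC.sum_cpaths_succ x M (fun k => Complex.I * (-Complex.I * ((m * ε : ℝ) : ℂ)) ^ k)]
  have hhead : ∀ (y : ℤ) (p : Fin ((M : ℤ) + 1).toNat → Bool),
      p ∈ cpaths y ((M : ℤ) + 1) → (List.ofFn p).headI = true := by
    intro y p hp
    exact (Finset.mem_filter.mp hp).2.2
  have hzpow : c ^ (-(M : ℤ) - 1) = c ^ (-(M : ℤ)) * c⁻¹ := by
    rw [show (-(M : ℤ) - 1) = -(M : ℤ) + (-1) by ring, zpow_add₀ hc.ne', zpow_neg_one]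
  constructor
  · rw [htop, hamre (x + 1), Complex.re_ofReal_mul, Complex.re_ofReal_mul,
      Complex.im_ofReal_mul, Complex.add_re, Complex.re_sum, Complex.re_sum,
      Complex.re_sum, Complex.im_sum]
    have e1 : (∑ i ∈ cpaths (x - 1) ((M : ℤ) + 1),
        (Complex.I * (-Complex.I * ((m * ε : ℝ) : ℂ))
          ^ (nturns i + if FC.lastMove i != true then 1 else 0)).re) = 0 :=
      Finset.sum_eq_zero fun p hp => FC.term_true_re p (hhead _ p hp) (m * ε)
    have e2 : (∑ i ∈ cpaths (x + 1) ((M : ℤ) + 1),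
        (Complex.I * (-Complex.I * ((m * ε : ℝ) : ℂ))
          ^ (nturns i + if FC.lastMove i != false then 1 else 0)).re)
        = (∑ i ∈ cpaths (x + 1) ((M : ℤ) + 1),
            (Complex.I * (-Complex.I * ((m * ε : ℝ) : ℂ)) ^ nturns i).re)
          + (m * ε) * ∑ i ∈ cpaths (x + 1) ((M : ℤ) + 1),
            (Complex.I * (-Complex.I * ((m * ε : ℝ) : ℂ)) ^ nturns i).im := by
      rw [Finset.mul_sum, ← Finset.sum_add_distrib]
      exact Finset.sum_congr rfl fun p hp => FC.term_false_re p (hhead _ p hp) (m * ε)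
    rw [e1, e2, hzpow, one_div]
    ring
  · rw [htop, hamre (x - 1), Complex.im_ofReal_mul, Complex.re_ofReal_mul,
      Complex.im_ofReal_mul, Complex.add_im, Complex.im_sum, Complex.im_sum,
      Complex.re_sum, Complex.im_sum]
    have e1 : (∑ i ∈ cpaths (x + 1) ((M : ℤ) + 1),
        (Complex.I * (-Complex.I * ((m * ε : ℝ) : ℂ))
          ^ (nturns i + if FC.lastMove i != false then 1 else 0)).im) = 0 :=
      Finset.sum_eq_zero fun p hp => FC.term_false_im p (hhead _ p hp) (m * ε)
    have e2 : (∑ i ∈ cpaths (x - 1) ((M : ℤ) + 1),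
        (Complex.I * (-Complex.I * ((m * ε : ℝ) : ℂ))
          ^ (nturns i + if FC.lastMove i != true then 1 else 0)).im)
        = (∑ i ∈ cpaths (x - 1) ((M : ℤ) + 1),
            (Complex.I * (-Complex.I * ((m * ε : ℝ) : ℂ)) ^ nturns i).im)
          - (m * ε) * ∑ i ∈ cpaths (x - 1) ((M : ℤ) + 1),
            (Complex.I * (-Complex.I * ((m * ε : ℝ) : ℂ)) ^ nturns i).re := by
      rw [Finset.mul_sum, ← Finset.sum_sub_distrib]
      exact Finset.sum_congr rfl fun p hp => FC.term_true_im p (hhead _ p hp) (m * ε)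
    rw [e1, e2, hzpow, one_div]
    ring
end
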